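/- arXiv:2103.15740 — 11 statements merged into one kernel-verified Lean document; each statement's English description precedes it below -/
import Mathlib

section
/- Let μ > 1 and v > μ. Then the function F(z) = (v - μ)·ln z + (μ - z)·ln v has exactly one root z in the interval (0, 1). -/
theorem stmt1 (μ v : ℝ) (hμ : 1 < μ) (hv : μ < v) :
    ∃! z : ℝ, z ∈ Set.Ioo (0 : ℝ) 1 ∧
      (v - μ) * Real.log z + (μ - z) * Real.log v = 0 := by
  have hv1 : 1 < v := hμ.trans hv
  have hlogv : 0 < Real.log v := Real.log_pos hv1
  have hvμ : 0 < v - μ := by linarith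
  set F : ℝ → ℝ := fun z => (v - μ) * Real.log z + (μ - z) * Real.log v with hF
  -- key concavity lemma for uniqueness
  have key : ∀ x y : ℝ, 0 < x → x < y → y < 1 → F x = 0 → 0 < F y := by
    intro x y hx hxy hy hFx
    have hx1 : x < 1 := hxy.trans hy
    set t : ℝ := (1 - y) / (1 - x) with ht
    have ht0 : 0 < t := div_pos (by linarith) (by linarith)
    have ht1 : t < 1 := (div_lt_one (by linarith)).mpr (by linarith)
    have ht' : t * (1 - x) = 1 - y := div_mul_cancel₀ _ (by linarith)
    have hcomb : t * x + (1 - t) * 1 = y := by linear_combination -ht'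
    have hlog : t * Real.log x + (1 - t) * Real.log 1 < Real.log (t * x + (1 - t) * 1) :=
      strictConcaveOn_log_Ioi.2 (Set.mem_Ioi.mpr hx) (Set.mem_Ioi.mpr one_pos)
        (by linarith) ht0 (by linarith) (by ring)
    rw [hcomb, Real.log_one] at hlog
    have hlog' : t * Real.log x < Real.log y := by linarith
    have hmul : (v - μ) * (t * Real.log x) < (v - μ) * Real.log y :=
      (mul_lt_mul_iff_right₀ hvμ).mpr hlog'
    simp only [hF] at hFx ⊢
    have hlx : (v - μ) * Real.log x = -((μ - x) * Real.log v) := by linarith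
    -- y = t*x + 1 - t
    have hy' : y = t * x + 1 - t := by linarith [hcomb]
    nlinarith [mul_pos (mul_pos (sub_pos.mpr ht1) (sub_pos.mpr hμ)) hlogv,
      mul_lt_mul_of_pos_left hlog' hvμ]
  -- existence via IVT
  set z0 : ℝ := Real.exp (-(μ * Real.log v + 1) / (v - μ)) with hz0
  have hz0pos : 0 < z0 := Real.exp_pos _
  have hz0lt1 : z0 < 1 := by
    rw [hz0, Real.exp_lt_one_iff]
    apply div_neg_of_neg_of_pos _ hvμ
    nlinarith
  have hlogz0 : Real.log z0 = -(μ * Real.log v + 1) / (v - μ) := Real.log_exp _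
  have hFz0 : F z0 < 0 := by
    simp only [hF, hlogz0]
    have : (v - μ) * (-(μ * Real.log v + 1) / (v - μ)) = -(μ * Real.log v + 1) := by
      field_simp
    rw [this]
    nlinarith [mul_pos hz0pos hlogv]
  have hF1 : 0 < F 1 := by
    simp only [hF, Real.log_one]
    nlinarith
  have hcont : ContinuousOn F (Set.Icc z0 1) := by
    apply ContinuousOn.add
    · exact continuousOn_const.mul (Real.continuousOn_log.mono (by
        intro x hx
        simp only [Set.mem_compl_iff, Set.mem_singleton_iff]
        intro h
        rw [h] at hx
        exact absurd hx.1 (not_le.mpr hz0pos)))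
    · exact ((continuousOn_const.sub continuousOn_id).mul continuousOn_const)
  have hsub := intermediate_value_Ioo (le_of_lt hz0lt1) hcont
  obtain ⟨c, hc, hFc⟩ := hsub ⟨hFz0, hF1⟩
  refine ⟨c, ⟨⟨hz0pos.trans hc.1, hc.2⟩, hFc⟩, ?_⟩
  rintro w ⟨⟨hw0, hw1⟩, hFw⟩
  by_contra hne
  rcases lt_or_gt_of_ne hne with h | h
  · exact absurd hFc (ne_of_gt (key w c hw0 h hc.2 hFw))
  · exact absurd hFw (ne_of_gt (key c w (hz0pos.trans hc.1) h hw1 hFc))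
end

section
/- Let μ > 1 and 0 < v < 1. Then the function F(z) = (v - μ)·ln z + (μ - z)·ln v has exactly one root z in the interval (μ, ∞). -/
open Set Filter Real

theorem stmt2 (μ v : ℝ) (hμ : 1 < μ) (hv0 : 0 < v) (hv1 : v < 1) :
    ∃! z : ℝ, z ∈ Set.Ioi μ ∧
      (v - μ) * Real.log z + (μ - z) * Real.log v = 0 := by
  have hμ0 : (0:ℝ) < μ := by linarith
  have hlv : Real.log v < 0 := Real.log_neg hv0 hv1
  set L : ℝ := -Real.log v with hLdef
  have hL : 0 < L := by simp [hLdef]; linarith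
  have hμv : 0 < μ - v := by linarith
  set F : ℝ → ℝ := fun z => (v - μ) * Real.log z + (μ - z) * Real.log v with hFdef
  have hFμ : F μ < 0 := by
    have h1 : 0 < Real.log μ := Real.log_pos hμ
    have : (v - μ) * Real.log μ < 0 := mul_neg_of_neg_of_pos (by linarith) h1
    simp [hFdef]
    nlinarith
  -- strict convexity
  have hconv : StrictConvexOn ℝ (Set.Ioi (0:ℝ)) F := by
    refine ⟨convex_Ioi 0, ?_⟩
    intro x hx y hy hxy a b ha hb hab
    simp only [smul_eq_mul, hFdef]
    have hlog := strictConcaveOn_log_Ioi.2 hx hy hxy ha hb hab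
    simp only [smul_eq_mul] at hlog
    have h1 : (v - μ) * Real.log (a*x + b*y) < (v - μ) * (a * Real.log x + b * Real.log y) :=
      mul_lt_mul_of_neg_left hlog (by linarith)
    have he : (μ - (a*x + b*y)) * Real.log v
        = a * ((μ - x) * Real.log v) + b * ((μ - y) * Real.log v) := by
      linear_combination (-(μ * Real.log v)) * hab
    nlinarith [h1, he]
  -- existence of M > 2μ with F M > 0
  have hev : ∀ᶠ z in atTop, F z > 0 := by
    have hc : (0:ℝ) < L / (2 * (μ - v)) := by positivity
    have hbd := Real.isLittleO_log_id_atTop.bound hc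
    filter_upwards [hbd, eventually_gt_atTop (2*μ), eventually_ge_atTop (1:ℝ)] with z hz1 hz2 hz3
    have hzpos : (0:ℝ) < z := by linarith
    have hlogz : Real.log z ≤ L / (2 * (μ - v)) * z := by
      have := hz1
      simp only [id_eq, Real.norm_eq_abs, abs_of_nonneg (Real.log_nonneg hz3),
        abs_of_pos hzpos] at this
      exact this
    have key : (μ - v) * Real.log z ≤ L / 2 * z := by
      have := mul_le_mul_of_nonneg_left hlogz (le_of_lt hμv)
      calc (μ - v) * Real.log z ≤ (μ - v) * (L / (2 * (μ - v)) * z) := this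
        _ = L / 2 * z := by field_simp
    have : F z = -((μ - v) * Real.log z) + (z - μ) * L := by
      simp [hFdef, hLdef]; ring
    rw [this]
    nlinarith
  obtain ⟨M, hM1, hM2⟩ := ((hev.and (eventually_gt_atTop μ)).exists)
  -- IVT on [μ, M]
  have hμM : μ < M := hM2
  have hcont : ContinuousOn F (Set.Icc μ M) := by
    apply ContinuousOn.add
    · exact continuousOn_const.mul (Real.continuousOn_log.mono (by
        intro x hx; simp; intro h; rw [h] at hx; exact absurd hx.1 (by linarith)))
    · fun_prop
  have hsub := intermediate_value_Ioo (le_of_lt hμM) hcont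
  have h0mem : (0:ℝ) ∈ Set.Ioo (F μ) (F M) := ⟨hFμ, hM1⟩
  obtain ⟨z, hz, hFz⟩ := hsub h0mem
  refine ⟨z, ⟨hz.1, hFz⟩, ?_⟩
  -- uniqueness
  have huniq : ∀ y : ℝ, y ∈ Set.Ioi μ ∧ F y = 0 → y = z := by
    -- first a lemma: no two distinct roots in Ioi μ
    have key : ∀ a b : ℝ, μ < a → a < b → F a = 0 → F b = 0 → False := by
      intro a b ha hab hFa hFb
      have hbμ : b - μ ≠ 0 := by intro h; nlinarith
      have ht0 : (0:ℝ) < (b - a) / (b - μ) := by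
        apply div_pos <;> linarith
      have ht1 : (0:ℝ) < (a - μ) / (b - μ) := by
        apply div_pos <;> linarith
      have hsum : (b - a) / (b - μ) + (a - μ) / (b - μ) = 1 := by
        field_simp
        ring
      have hcomb : ((b - a) / (b - μ)) • μ + ((a - μ) / (b - μ)) • b = a := by
        simp only [smul_eq_mul]
        field_simp
        ring
      have := hconv.2 (Set.mem_Ioi.mpr hμ0) (Set.mem_Ioi.mpr (by linarith : (0:ℝ) < b))
        (by intro h; rw [h] at ha; linarith) ht0 ht1 hsum
      rw [hcomb] at this
      rw [hFa, hFb] at this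
      simp only [smul_eq_mul, mul_zero, add_zero] at this
      nlinarith [mul_pos ht0 (neg_pos.mpr hFμ)]
    intro y ⟨hy1, hy2⟩
    rcases lt_trichotomy y z with h | h | h
    · exact absurd (key y z hy1 h hy2 hFz) (fun x => x)
    · exact h
    · exact absurd (key z y hz.1 h hFz hy2) (fun x => x)
  exact huniq
end

section
/- Let X be a positive random variable with E[ln X] = 0 and E[X] ≤ μ where μ > 1. Then for every real v > μ, P(X ≥ v) ≤ (μ - z_v)/(v - z_v), where z_v is the unique root in (0,1) of (v - μ)·ln z + (μ - z)·ln v = 0. -/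
open MeasureTheory

theorem stmt4 {Ω : Type*} [MeasurableSpace Ω] (P : Measure Ω) [IsProbabilityMeasure P]
    (X : Ω → ℝ) (hXm : Measurable X) (hXpos : ∀ ω, 0 < X ω)
    (hXint : Integrable X P) (hlnint : Integrable (fun ω => Real.log (X ω)) P)
    (hG : ∫ ω, Real.log (X ω) ∂P = 0)
    (μ v z : ℝ) (hμ : 1 < μ) (hA : ∫ ω, X ω ∂P ≤ μ) (hv : μ < v)
    (hz : z ∈ Set.Ioo (0 : ℝ) 1)
    (hroot : (v - μ) * Real.log z + (μ - z) * Real.log v = 0) :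
    (P {ω | v ≤ X ω}).toReal ≤ (μ - z) / (v - z) := by
  obtain ⟨hz0, hz1⟩ := hz
  have hv1 : 1 < v := lt_trans hμ hv
  have hv0 : 0 < v := by linarith
  -- c := v - z - z * (log v - log z) > 0
  have hc0 : z * (Real.log v - Real.log z) < v - z := by
    have hvz : (1:ℝ) < v / z := (one_lt_div hz0).2 (by linarith)
    have h := Real.log_lt_sub_one_of_pos (by positivity : (0:ℝ) < v / z) (ne_of_gt hvz)
    rw [Real.log_div (by linarith) (ne_of_gt hz0)] at h
    have h2 := mul_lt_mul_of_pos_left h hz0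
    have hdiv : z * (v / z - 1) = v - z := by field_simp
    nlinarith
  set c := v - z - z * (Real.log v - Real.log z) with hc
  have hcpos : 0 < c := by simp only [hc]; linarith
  -- the auxiliary function
  set f : Ω → ℝ := fun ω => X ω - z - z * (Real.log (X ω) - Real.log z) with hf
  have hfint : Integrable f P := by
    have : Integrable (fun ω => Real.log (X ω) - Real.log z) P :=
      hlnint.sub (integrable_const _)
    exact (hXint.sub (integrable_const z)).sub (this.const_mul z)
  have hfnonneg : ∀ ω, 0 ≤ f ω := by
    intro ω
    have hx : 0 < X ω := hXpos ω
    have h := Real.log_le_sub_one_of_pos (by positivity : (0:ℝ) < X ω / z)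
    rw [Real.log_div (ne_of_gt hx) (ne_of_gt hz0)] at h
    have h2 := mul_le_mul_of_nonneg_left h hz0.le
    have hdiv : z * (X ω / z - 1) = X ω - z := by field_simp
    simp only [hf]
    nlinarith
  have hsubset : {ω | v ≤ X ω} ⊆ {ω | c ≤ f ω} := by
    intro ω (hx : v ≤ X ω)
    have hx0 : 0 < X ω := hXpos ω
    have hlog : Real.log v ≤ Real.log (X ω) := Real.log_le_log hv0 hx
    have h := Real.log_le_sub_one_of_pos (by positivity : (0:ℝ) < X ω / v)
    rw [Real.log_div (ne_of_gt hx0) (ne_of_gt hv0)] at h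
    have h2 := mul_le_mul_of_nonneg_left h hv0.le
    have hdiv : v * (X ω / v - 1) = X ω - v := by field_simp
    have h3 : z * (Real.log (X ω) - Real.log v) ≤ v * (Real.log (X ω) - Real.log v) := by
      apply mul_le_mul_of_nonneg_right (by linarith) (by linarith)
    show c ≤ f ω
    simp only [hf, hc]
    nlinarith
  -- Markov
  have hmarkov := mul_meas_ge_le_integral_of_nonneg (μ := P)
    (ae_of_all _ hfnonneg) hfint c
  have hmono : (P {ω | v ≤ X ω}).toReal ≤ (P {ω | c ≤ f ω}).toReal :=
    ENNReal.toReal_mono (measure_ne_top _ _) (measure_mono hsubset)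
  -- compute the integral
  have hint : ∫ ω, f ω ∂P = (∫ ω, X ω ∂P) - z + z * Real.log z := by
    have h1 : Integrable (fun ω => Real.log (X ω) - Real.log z) P :=
      hlnint.sub (integrable_const _)
    rw [show f = fun ω => (X ω - z * Real.log (X ω)) + (z * Real.log z - z) from
      funext fun ω => by simp only [hf]; ring]
    have hi : Integrable (fun ω => X ω - z * Real.log (X ω)) P :=
      hXint.sub (hlnint.const_mul z)
    have hi2 : Integrable (fun ω => z * Real.log (X ω)) P := hlnint.const_mul z
    rw [integral_add hi (integrable_const _), integral_sub hXint hi2,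
      MeasureTheory.integral_const_mul, hG]
    simp
    ring
  have hintle : ∫ ω, f ω ∂P ≤ μ - z + z * Real.log z := by
    rw [hint]; linarith
  have hfinal : (μ - z + z * Real.log z) / c = (μ - z) / (v - z) := by
    rw [div_eq_div_iff hcpos.ne' (by linarith : (0:ℝ) < v - z).ne']
    simp only [hc]
    linear_combination z * hroot
  have hp : (P {ω | v ≤ X ω}).toReal ≤ (μ - z + z * Real.log z) / c := by
    rw [le_div_iff₀ hcpos]
    calc (P {ω | v ≤ X ω}).toReal * c ≤ (P {ω | c ≤ f ω}).toReal * c := by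
          apply mul_le_mul_of_nonneg_right hmono hcpos.le
      _ = c * (P {ω | c ≤ f ω}).toReal := mul_comm _ _
      _ ≤ ∫ ω, f ω ∂P := hmarkov
      _ ≤ _ := hintle
  linarith [hfinal ▸ hp]
end

section
/- Let X be a positive random variable with E[ln X] = 0 and E[X] ≤ μ where μ > 1. Then for every real v with 0 < v < 1, P(X ≤ v) ≤ (μ - z_v)/(v - z_v), where z_v is the unique root in (μ,∞) of (v - μ)·ln z + (μ - z)·ln v = 0. -/
open MeasureTheory

theorem stmt5 {Ω : Type*} [MeasurableSpace Ω] (P : Measure Ω) [IsProbabilityMeasure P]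
    (X : Ω → ℝ) (hXm : Measurable X) (hXpos : ∀ ω, 0 < X ω)
    (hXint : Integrable X P) (hlnint : Integrable (fun ω => Real.log (X ω)) P)
    (hG : ∫ ω, Real.log (X ω) ∂P = 0)
    (μ v z : ℝ) (hμ : 1 < μ) (hA : ∫ ω, X ω ∂P ≤ μ) (hv0 : 0 < v) (hv1 : v < 1)
    (hz : z ∈ Set.Ioi μ)
    (hroot : (v - μ) * Real.log z + (μ - z) * Real.log v = 0) :
    (P {ω | X ω ≤ v}).toReal ≤ (μ - z) / (v - z) := by
  have hμz : μ < z := hz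
  have hz0 : (0:ℝ) < z := by linarith
  have hvz : v < z := by linarith
  set D := Real.log v - Real.log z + 1 - v / z with hD_def
  have hD : D < 0 := by
    rw [hD_def]
    have h1 : Real.log (v / z) < v / z - 1 :=
      Real.log_lt_sub_one_of_pos (by positivity) (by
        intro h
        rw [div_eq_one_iff_eq (ne_of_gt hz0)] at h
        linarith)
    rw [Real.log_div (ne_of_gt hv0) (ne_of_gt hz0)] at h1
    linarith
  have hDne : D ≠ 0 := ne_of_lt hD
  -- the pointwise bound
  have hpt : ∀ ω, Set.indicator {ω | X ω ≤ v} (fun _ => (1:ℝ)) ω ≤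
      (Real.log (X ω) - X ω / z + 1 - Real.log z) / D := by
    intro ω
    have hx0 := hXpos ω
    simp only [Set.indicator_apply, Set.mem_setOf_eq]
    by_cases h : X ω ≤ v
    · rw [if_pos h]
      rw [le_div_iff_of_neg hD, one_mul]
      -- need : log x - x/z + 1 - log z ≤ D, i.e. log x - log v ≤ (x - v)/z
      have h1 : Real.log (X ω / v) ≤ X ω / v - 1 :=
        Real.log_le_sub_one_of_pos (by positivity)
      rw [Real.log_div (ne_of_gt hx0) (ne_of_gt hv0)] at h1
      have h2 : (X ω - v) / v ≤ (X ω - v) / z := by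
        rw [div_le_div_iff₀ hv0 hz0]
        nlinarith
      have h3 : X ω / v - 1 = (X ω - v) / v := by field_simp
      have h4 : (X ω - v) / z = X ω / z - v / z := by ring
      rw [hD_def]
      linarith
    · rw [if_neg h]
      apply div_nonneg_of_nonpos _ (le_of_lt hD)
      have h1 : Real.log (X ω / z) ≤ X ω / z - 1 :=
        Real.log_le_sub_one_of_pos (by positivity)
      rw [Real.log_div (ne_of_gt hx0) (ne_of_gt hz0)] at h1
      linarith
  -- integrability
  have hint : Integrable (fun ω => (Real.log (X ω) - X ω / z + 1 - Real.log z) / D) P := by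
    apply Integrable.div_const
    exact (((hlnint.sub (hXint.div_const z)).add (integrable_const 1)).sub
      (integrable_const (Real.log z)))
  have hmeas : MeasurableSet {ω | X ω ≤ v} := hXm measurableSet_Iic
  have hindint : Integrable (Set.indicator {ω | X ω ≤ v} (fun _ => (1:ℝ))) P :=
    (integrable_const (1:ℝ)).indicator hmeas
  -- integral comparison
  have hmain : (P {ω | X ω ≤ v}).toReal ≤
      ∫ ω, (Real.log (X ω) - X ω / z + 1 - Real.log z) / D ∂P := by
    change P.real {ω | X ω ≤ v} ≤ _
    rw [← integral_indicator_one hmeas]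
    exact integral_mono hindint hint hpt
  -- compute the integral
  have i1 : Integrable (fun ω => Real.log (X ω) - X ω / z) P := by
    exact hlnint.sub (hXint.div_const z)
  have i2 : Integrable (fun ω => Real.log (X ω) - X ω / z + 1) P := by
    exact i1.add (integrable_const 1)
  have e1 : ∫ ω, (Real.log (X ω) - X ω / z + 1 - Real.log z) ∂P
      = (∫ ω, (Real.log (X ω) - X ω / z + 1) ∂P) - ∫ _ω, Real.log z ∂P :=
    integral_sub i2 (integrable_const _)
  have e2 : ∫ ω, (Real.log (X ω) - X ω / z + 1) ∂P
      = (∫ ω, (Real.log (X ω) - X ω / z) ∂P) + ∫ _ω, (1:ℝ) ∂P :=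
    integral_add i1 (integrable_const _)
  have e3 : ∫ ω, (Real.log (X ω) - X ω / z) ∂P
      = (∫ ω, Real.log (X ω) ∂P) - ∫ ω, X ω / z ∂P :=
    integral_sub hlnint (hXint.div_const z)
  have e4 : ∫ ω, X ω / z ∂P = (∫ ω, X ω ∂P) / z := integral_div z X
  have hcalc : ∫ ω, (Real.log (X ω) - X ω / z + 1 - Real.log z) / D ∂P =
      (0 - (∫ ω, X ω ∂P) / z + 1 - Real.log z) / D := by
    rw [integral_div, e1, e2, e3, e4, hG]
    simp
  rw [hcalc] at hmain
  -- monotonicity in A = ∫ X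
  have hstep : (0 - (∫ ω, X ω ∂P) / z + 1 - Real.log z) / D ≤
      (0 - μ / z + 1 - Real.log z) / D := by
    rw [div_le_div_right_of_neg hD]
    have h5 : (∫ ω, X ω ∂P) / z ≤ μ / z := by gcongr
    linarith
  -- final algebra using the root equation
  have hvzne : v - z ≠ 0 := by intro h; linarith
  have hfin : (0 - μ / z + 1 - Real.log z) / D = (μ - z) / (v - z) := by
    rw [div_eq_div_iff hDne hvzne]
    have hD2 : D * z = (Real.log v - Real.log z + 1) * z - v := by
      rw [hD_def]; field_simp
    field_simp
    linear_combination (-z) * hroot + (z - μ) * hD2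
  rw [hfin] at hstep
  linarith
end

section
/- Let X be a positive random variable with E[ln X] = 0 and E[X] ≤ μ where μ > 1. Then for every real v > 1, P(X ≥ v) ≤ (μ - 1)/(v - 1 - ln v). -/
open MeasureTheory

theorem stmt6 {Ω : Type*} [MeasurableSpace Ω] (P : Measure Ω) [IsProbabilityMeasure P]
    (X : Ω → ℝ) (hXm : Measurable X) (hXpos : ∀ ω, 0 < X ω)
    (hXint : Integrable X P) (hlnint : Integrable (fun ω => Real.log (X ω)) P)
    (hG : ∫ ω, Real.log (X ω) ∂P = 0)
    (μ v : ℝ) (hμ : 1 < μ) (hA : ∫ ω, X ω ∂P ≤ μ) (hv : 1 < v) :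
    (P {ω | v ≤ X ω}).toReal ≤ (μ - 1) / (v - 1 - Real.log v) := by
  set Y : Ω → ℝ := fun ω => X ω - 1 - Real.log (X ω) with hYdef
  set c : ℝ := v - 1 - Real.log v with hcdef
  have hYint : Integrable Y P := (hXint.sub (integrable_const 1)).sub hlnint
  have hYnn : ∀ ω, 0 ≤ Y ω := fun ω => by
    have := Real.log_le_sub_one_of_pos (hXpos ω)
    show 0 ≤ X ω - 1 - Real.log (X ω)
    linarith
  have hc : 0 < c := by
    have := Real.log_lt_sub_one_of_pos (lt_trans one_pos hv) (ne_of_gt hv)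
    show 0 < v - 1 - Real.log v
    linarith
  have hsub : {ω | v ≤ X ω} ⊆ {ω | c ≤ Y ω} := by
    intro ω hω
    simp only [Set.mem_setOf_eq] at *
    have hx : v ≤ X ω := hω
    have hv0 : (0:ℝ) < v := lt_trans one_pos hv
    have h1 : Real.log (X ω) - Real.log v = Real.log (X ω / v) :=
      (Real.log_div (ne_of_gt (hXpos ω)) (ne_of_gt hv0)).symm
    have h2 : Real.log (X ω / v) ≤ X ω / v - 1 :=
      Real.log_le_sub_one_of_pos (div_pos (hXpos ω) hv0)
    have h3 : X ω / v - 1 = (X ω - v) / v := by field_simp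
    have h4 : (X ω - v) / v ≤ X ω - v := div_le_self (by linarith) hv.le
    show v - 1 - Real.log v ≤ X ω - 1 - Real.log (X ω)
    linarith
  have hmarkov := mul_meas_ge_le_integral_of_nonneg
    (μ := P) (f := Y) (Filter.Eventually.of_forall hYnn) hYint c
  have hmono : (P {ω | v ≤ X ω}).toReal ≤ (P {ω | c ≤ Y ω}).toReal :=
    ENNReal.toReal_mono (measure_ne_top _ _) (measure_mono hsub)
  have hYint_val : ∫ ω, Y ω ∂P ≤ μ - 1 := by
    have : ∫ ω, Y ω ∂P = (∫ ω, X ω ∂P) - 1 - ∫ ω, Real.log (X ω) ∂P := by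
      have hXi1 : Integrable (fun ω => X ω - 1) P := hXint.sub (integrable_const 1)
      show ∫ ω, ((fun ω => X ω - 1) ω - Real.log (X ω)) ∂P = _
      rw [integral_sub hXi1 hlnint, integral_sub hXint (integrable_const 1)]
      simp
    rw [this, hG]; linarith
  rw [le_div_iff₀ hc]
  calc (P {ω | v ≤ X ω}).toReal * c = c * (P {ω | v ≤ X ω}).toReal := mul_comm _ _
    _ ≤ c * (P {ω | c ≤ Y ω}).toReal := by
        exact mul_le_mul_of_nonneg_left hmono hc.le
    _ ≤ ∫ ω, Y ω ∂P := hmarkov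
    _ ≤ μ - 1 := hYint_val
end

section
/- Let X be a positive random variable with E[ln X] = 0 and E[X] ≤ μ where μ > 1. Then for every real v with 0 < v < 1, P(X ≤ v) ≤ (μ - 1)/(v - 1 - ln v). -/
open MeasureTheory

theorem stmt7 {Ω : Type*} [MeasurableSpace Ω] (P : Measure Ω) [IsProbabilityMeasure P]
    (X : Ω → ℝ) (hXm : Measurable X) (hXpos : ∀ ω, 0 < X ω)
    (hXint : Integrable X P) (hlnint : Integrable (fun ω => Real.log (X ω)) P)
    (hG : ∫ ω, Real.log (X ω) ∂P = 0)
    (μ v : ℝ) (hμ : 1 < μ) (hA : ∫ ω, X ω ∂P ≤ μ) (hv0 : 0 < v) (hv1 : v < 1) :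
    (P {ω | X ω ≤ v}).toReal ≤ (μ - 1) / (v - 1 - Real.log v) := by
  set c : ℝ := v - 1 - Real.log v with hc_def
  have hlogv : Real.log v < v - 1 := by
    have := Real.add_one_le_exp v
    have h := Real.log_lt_sub_one_of_pos hv0 (by linarith)
    linarith
  have hc : 0 < c := by simp only [hc_def]; linarith
  set Y : Ω → ℝ := fun ω => X ω - 1 - Real.log (X ω) with hY_def
  have hYint : Integrable Y P := (hXint.sub (integrable_const 1)).sub hlnint
  have hYnn : 0 ≤ᵐ[P] Y := Filter.Eventually.of_forall fun ω => by
    have := Real.log_le_sub_one_of_pos (hXpos ω)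
    simp only [hY_def, Pi.zero_apply]; linarith
  have hXint1 : Integrable (fun ω => X ω - 1) P := hXint.sub (integrable_const 1)
  have hYint_val : ∫ ω, Y ω ∂P ≤ μ - 1 := by
    have h1 : ∫ ω, Y ω ∂P = (∫ ω, X ω - 1 ∂P) - ∫ ω, Real.log (X ω) ∂P :=
      integral_sub hXint1 hlnint
    have h2 : ∫ ω, X ω - 1 ∂P = (∫ ω, X ω ∂P) - 1 := by
      rw [integral_sub hXint (integrable_const 1)]; simp
    rw [h1, h2, hG]; linarith
  have hsub : {ω | X ω ≤ v} ⊆ {ω | c ≤ Y ω} := by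
    intro ω (hω : X ω ≤ v)
    have hx : 0 < X ω := hXpos ω
    have hlog : Real.log (X ω / v) ≤ X ω / v - 1 :=
      Real.log_le_sub_one_of_pos (div_pos hx hv0)
    have hdiv : X ω / v - 1 ≤ X ω - v := by
      rw [div_sub_one hv0.ne', div_le_iff₀ hv0]
      nlinarith
    have hlogdiv : Real.log (X ω / v) = Real.log (X ω) - Real.log v :=
      Real.log_div hx.ne' hv0.ne'
    show c ≤ Y ω
    simp only [hY_def, hc_def]
    nlinarith [hlog, hdiv, hlogdiv]
  have hMarkov := mul_meas_ge_le_integral_of_nonneg hYnn hYint c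
  have hmono : (P {ω | X ω ≤ v}).toReal ≤ (P {ω | c ≤ Y ω}).toReal := by
    apply ENNReal.toReal_mono (measure_ne_top P _)
    exact measure_mono hsub
  rw [le_div_iff₀ hc]
  calc (P {ω | X ω ≤ v}).toReal * c ≤ (P {ω | c ≤ Y ω}).toReal * c := by
        exact mul_le_mul_of_nonneg_right hmono hc.le
    _ = c * (P {ω | c ≤ Y ω}).toReal := mul_comm _ _
    _ ≤ ∫ ω, Y ω ∂P := hMarkov
    _ ≤ μ - 1 := hYint_val
end

section
/- Let 1 < μ < v and let z_v ∈ (0,1) be the unique root of F(z) = (v - μ)·ln z + (μ - z)·ln v = 0. Then the two-point random variable X with P(X = v) = (μ-z_v)/(v-z_v) and P(X = z_v) = 1 - (μ-z_v)/(v-z_v) satisfies E[X] = μ and E[ln X] = 0, so that the bound (μ-z_v)/(v-z_v) on P(X ≥ v) is attained. -/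
open MeasureTheory

theorem stmt8 {Ω : Type*} [MeasurableSpace Ω] (P : Measure Ω) [IsProbabilityMeasure P]
    (X : Ω → ℝ) (hXm : Measurable X)
    (μ v z : ℝ) (hμ : 1 < μ) (hv : μ < v)
    (hz : z ∈ Set.Ioo (0 : ℝ) 1)
    (hroot : (v - μ) * Real.log z + (μ - z) * Real.log v = 0)
    (hPv : P {ω | X ω = v} = ENNReal.ofReal ((μ - z) / (v - z)))
    (hPz : P {ω | X ω = z} = ENNReal.ofReal (1 - (μ - z) / (v - z))) :
    (∫ ω, X ω ∂P = μ) ∧ (∫ ω, Real.log (X ω) ∂P = 0) ∧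
      (P {ω | v ≤ X ω}).toReal = (μ - z) / (v - z) := by
  obtain ⟨hz0, hz1⟩ := hz
  have hzμ : z < μ := hz1.trans hμ
  have hzv : z < v := hzμ.trans hv
  set p : ℝ := (μ - z) / (v - z) with hp
  have hp0 : 0 < p := div_pos (by linarith) (by linarith)
  have hp1 : p ≤ 1 := (div_le_one (by linarith)).2 (by linarith)
  have hA : MeasurableSet {ω | X ω = v} := hXm (measurableSet_singleton v)
  have hB : MeasurableSet {ω | X ω = z} := hXm (measurableSet_singleton z)
  have hvz : v ≠ z := by linarith
  have hdisj : Disjoint {ω | X ω = v} {ω | X ω = z} := by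
    rw [Set.disjoint_left]
    intro ω h1 h2
    exact hvz (h1.symm.trans h2)
  have hPAr : (P {ω | X ω = v}).toReal = p := by
    rw [hPv, ENNReal.toReal_ofReal hp0.le]
  have hPBr : (P {ω | X ω = z}).toReal = 1 - p := by
    rw [hPz, ENNReal.toReal_ofReal (by linarith)]
  have hsum : P ({ω | X ω = v} ∪ {ω | X ω = z}) = 1 := by
    rw [measure_union hdisj hB, hPv, hPz,
      ← ENNReal.ofReal_add hp0.le (by linarith : (0:ℝ) ≤ 1 - p)]
    norm_num
  have hae : ∀ᵐ ω ∂P, X ω = v ∨ X ω = z := by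
    have hc : P ({ω | X ω = v} ∪ {ω | X ω = z})ᶜ = 0 :=
      (prob_compl_eq_zero_iff (hA.union hB)).2 hsum
    have hseteq : {ω | ¬(X ω = v ∨ X ω = z)} = ({ω | X ω = v} ∪ {ω | X ω = z})ᶜ := by
      ext ω; simp [not_or]
    rw [ae_iff, hseteq]
    exact hc
  have key : ∀ g : ℝ → ℝ, ∫ ω, g (X ω) ∂P = p * g v + (1 - p) * g z := by
    intro g
    have heq : (fun ω => g (X ω)) =ᵐ[P]
        (fun ω => ({ω | X ω = v}).indicator (fun _ => g v) ω
          + ({ω | X ω = z}).indicator (fun _ => g z) ω) := by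
      filter_upwards [hae] with ω hω
      rcases hω with h | h
      · have hnB : ω ∉ {ω | X ω = z} := fun hb => hvz (h.symm.trans hb)
        simp [Set.indicator_of_mem, Set.indicator_of_notMem, h, hnB]
      · have hnA : ω ∉ {ω | X ω = v} := fun ha => hvz (ha.symm.trans h)
        simp [Set.indicator_of_mem, Set.indicator_of_notMem, h, hnA]
    rw [integral_congr_ae heq, integral_add
      ((integrable_const (g v)).indicator hA)
      ((integrable_const (g z)).indicator hB),
      integral_indicator_const _ hA, integral_indicator_const _ hB,
      measureReal_def, measureReal_def, hPAr, hPBr, smul_eq_mul, smul_eq_mul]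
  have hEv : ∫ ω, X ω ∂P = μ := by
    have := key id
    simp only [id] at this
    have hne : v - z ≠ 0 := by linarith
    have hpc : p * (v - z) = μ - z := div_mul_cancel₀ _ hne
    rw [this]
    linear_combination hpc
  have hlog : ∫ ω, Real.log (X ω) ∂P = 0 := by
    have hne : v - z ≠ 0 := by linarith
    have hpc : p * (v - z) = μ - z := div_mul_cancel₀ _ hne
    rw [key Real.log]
    have hexp : p * Real.log v + (1 - p) * Real.log z =
        ((v - μ) * Real.log z + (μ - z) * Real.log v) / (v - z) := by
      field_simp
      linear_combination (Real.log v - Real.log z) * hpc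
    rw [hexp, hroot, zero_div]
  refine ⟨hEv, hlog, ?_⟩
  have hset : P {ω | v ≤ X ω} = P {ω | X ω = v} := by
    apply measure_congr
    apply Filter.eventuallyEq_set.2
    filter_upwards [hae] with ω hω
    rcases hω with h | h
    · simp [h, le_refl]
    · simp [h]
      constructor
      · intro hle; linarith
      · intro heq; linarith
  rw [hset, hPAr]
end

section
/- For all positive reals z < v, the function g(x) = a·x − b·ln x + c (with a, b, c as defined from z, v so that g is convex, g(z) = g'(z) = 0, g(v) = 1) satisfies g(x) ≥ 1 whenever x ≥ v; in particular g(x) majorizes the indicator of [v, ∞) on (0,∞). -/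
theorem stmt11 (v z : ℝ) (hz : 0 < z) (hzv : z < v) :
    let r : ℝ := z / v
    let h : ℝ := 1 - r + r * Real.log r
    let a : ℝ := (1 / v) / h
    let b : ℝ := a * z
    let c : ℝ := a * z * (Real.log z - 1)
    let g : ℝ → ℝ := fun x => a * x - b * Real.log x + c
    (∀ x : ℝ, v ≤ x → 1 ≤ g x) ∧
      ∀ x ∈ Set.Ioi (0 : ℝ), Set.indicator (Set.Ici v) (fun _ => (1 : ℝ)) x ≤ g x := by
  intro r h a b c g
  have hv : 0 < v := hz.trans hzv
  have hr0 : 0 < r := div_pos hz hv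
  have hr1 : r < 1 := (div_lt_one hv).2 hzv
  have hpos : 0 < h := by
    have h1 : Real.log (1 / r) < 1 / r - 1 :=
      Real.log_lt_sub_one_of_pos (by positivity) (by
        intro hc
        have : r = 1 := by field_simp at hc; linarith
        linarith)
    rw [Real.log_div one_ne_zero hr0.ne', Real.log_one] at h1
    have h2 : r * (0 - Real.log r) < r * (1 / r - 1) :=
      mul_lt_mul_of_pos_left h1 hr0
    have h3 : r * (1 / r) = 1 := by field_simp
    show 0 < 1 - r + r * Real.log r
    nlinarith
  have ha : 0 < a := div_pos (by positivity) hpos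
  have hvh : v * h = v - z + z * (Real.log z - Real.log v) := by
    show v * (1 - z / v + z / v * Real.log (z / v)) = _
    rw [Real.log_div hz.ne' hv.ne']
    field_simp
  have hone : a * (v - z + z * (Real.log z - Real.log v)) = 1 := by
    rw [← hvh]
    show (1 / v) / h * (v * h) = 1
    field_simp
  have hb : b = a * z := rfl
  have hc : c = a * z * (Real.log z - 1) := rfl
  clear_value a b c
  have key : ∀ x : ℝ, v ≤ x → 1 ≤ g x := by
    intro x hx
    have hx0 : 0 < x := hv.trans_le hx
    have hlog : Real.log x - Real.log v ≤ x / v - 1 := by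
      have := Real.log_le_sub_one_of_pos (show (0:ℝ) < x / v by positivity)
      rwa [Real.log_div hx0.ne' hv.ne'] at this
    have hlog0 : Real.log v ≤ Real.log x := Real.log_le_log hv hx
    have h1 : z * (Real.log x - Real.log v) ≤ x - v := by
      have hv1 : v * (x / v - 1) = x - v := by field_simp
      nlinarith
    have hgx : g x = 1 + a * ((x - v) - z * (Real.log x - Real.log v)) := by
      show a * x - b * Real.log x + c = _
      rw [hb, hc]; linear_combination hone
    rw [hgx]
    nlinarith [mul_nonneg ha.le (sub_nonneg.2 h1)]
  refine ⟨key, ?_⟩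
  intro x hx
  have hx0 : 0 < x := hx
  by_cases hxv : v ≤ x
  · rw [Set.indicator_apply, if_pos (Set.mem_Ici.mpr hxv)]
    exact key x hxv
  · rw [Set.indicator_apply, if_neg (fun hm => hxv (Set.mem_Ici.mp hm))]
    have h1 : z * (Real.log x - Real.log z) ≤ x - z := by
      have h2 := Real.log_le_sub_one_of_pos (show (0:ℝ) < x / z by positivity)
      rw [Real.log_div hx0.ne' hz.ne'] at h2
      have hz1 : z * (x / z - 1) = x - z := by field_simp
      nlinarith
    have hgx : g x = a * ((x - z) - z * (Real.log x - Real.log z)) := by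
      show a * x - b * Real.log x + c = _
      rw [hb, hc]; ring
    rw [hgx]
    exact mul_nonneg ha.le (sub_nonneg.2 h1)
end

section
/- Let μ > 1 and define G_μ(v) = μ·ln v + (v − μ)·ln((v − μ)/ln v) + μ − v. Then G_μ(v)/(v − 1) > 0 for all v ∈ (μ,∞) ∪ (0,1); equivalently, G_μ(v) > 0 for v > μ and G_μ(v) < 0 for 0 < v < 1. -/
theorem stmt16 (μ : ℝ) (hμ : 1 < μ) (v : ℝ)
    (hv : v ∈ Set.Ioi μ ∪ Set.Ioo (0 : ℝ) 1) :
    0 < (μ * Real.log v + (v - μ) * Real.log ((v - μ) / Real.log v) + μ - v) / (v - 1) := by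
  rcases hv with hv | ⟨hv0, hv1⟩
  · -- case v > μ
    have hvμ : μ < v := hv
    have hL : 0 < Real.log v := Real.log_pos (by linarith)
    have hb : 0 < v - μ := by linarith
    have hlog : 1 - Real.log v / (v - μ) ≤ Real.log ((v - μ) / Real.log v) := by
      have h := Real.log_le_sub_one_of_pos (div_pos hL hb)
      rw [Real.log_div hL.ne' hb.ne'] at h
      rw [Real.log_div hb.ne' hL.ne']
      linarith
    have hmul := mul_le_mul_of_nonneg_left hlog hb.le
    have hrw : (v - μ) * (1 - Real.log v / (v - μ)) = (v - μ) - Real.log v := by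
      field_simp
    rw [hrw] at hmul
    have hpos : 0 < (μ - 1) * Real.log v := mul_pos (by linarith) hL
    apply div_pos _ (by linarith : (0:ℝ) < v - 1)
    nlinarith
  · -- case 0 < v < 1
    have hL : Real.log v < 0 := Real.log_neg hv0 hv1
    have hb : v - μ < 0 := by linarith
    have hlog : 1 - Real.log v / (v - μ) ≤ Real.log ((v - μ) / Real.log v) := by
      have h := Real.log_le_sub_one_of_pos (div_pos_of_neg_of_neg hL hb)
      rw [Real.log_div hL.ne hb.ne] at h
      rw [Real.log_div hb.ne hL.ne]
      linarith
    have hmul := mul_le_mul_of_nonpos_left hlog hb.le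
    have hrw : (v - μ) * (1 - Real.log v / (v - μ)) = (v - μ) - Real.log v := by
      rw [mul_sub, mul_one, mul_div_cancel₀ _ hb.ne]
    rw [hrw] at hmul
    have hneg : (μ - 1) * Real.log v < 0 :=
      mul_neg_of_pos_of_neg (by linarith) hL
    apply div_pos_of_neg_of_neg _ (by linarith : v - 1 < 0)
    nlinarith
end

section
/- Let μ > 1 and v ∈ (μ,∞) ∪ (0,1), let z_v be the root of F(z) = (v−μ)·ln z + (μ−z)·ln v = 0 (in (0,1) if v > μ, in (μ,∞) if v < 1), and z̃_v = (v−μ)/ln v. Then z_v < z̃_v if v > μ, and z_v > z̃_v if 0 < v < 1. -/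
theorem stmt17 (μ : ℝ) (hμ : 1 < μ) (v z : ℝ)
    (hv : v ∈ Set.Ioi μ ∪ Set.Ioo (0 : ℝ) 1)
    (hz : (μ < v → z ∈ Set.Ioo (0 : ℝ) 1) ∧ (v < 1 → z ∈ Set.Ioi μ))
    (hroot : (v - μ) * Real.log z + (μ - z) * Real.log v = 0) :
    (μ < v → z < (v - μ) / Real.log v) ∧ (v < 1 → (v - μ) / Real.log v < z) := by
  constructor
  · intro hμv
    obtain ⟨hz0, hz1⟩ := hz.1 hμv
    have hlv : 0 < Real.log v := Real.log_pos (lt_trans hμ hμv)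
    have hlz : Real.log z < 0 := Real.log_neg hz0 hz1
    -- key: z * log z > z - 1
    have hk : Real.log (1/z) < 1/z - 1 :=
      Real.log_lt_sub_one_of_pos (by positivity) (by
        intro h
        have : z = 1 := by field_simp at h; linarith
        linarith)
    rw [Real.log_div one_ne_zero (ne_of_gt hz0), Real.log_one] at hk
    have key : z - 1 < z * Real.log z := by
      have := mul_lt_mul_of_pos_left hk hz0
      field_simp at this
      nlinarith
    have h2 : (v - μ - z * Real.log v) * Real.log z
        = Real.log v * (z - μ - z * Real.log z) := by linear_combination hroot
    have h1 : Real.log v * (z - μ - z * Real.log z) < 0 := by nlinarith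
    rw [lt_div_iff₀ hlv]
    nlinarith
  · intro hv1
    have hzμ : μ < z := hz.2 hv1
    have hv0 : 0 < v := by
      rcases hv with h | h
      · exact lt_trans (lt_trans one_pos hμ) h
      · exact h.1
    have hlv : Real.log v < 0 := Real.log_neg hv0 hv1
    have hlz : 0 < Real.log z := Real.log_pos (lt_trans hμ hzμ)
    have hz0 : (0:ℝ) < z := lt_trans (lt_trans one_pos hμ) hzμ
    have hk : Real.log (1/z) < 1/z - 1 :=
      Real.log_lt_sub_one_of_pos (by positivity) (by
        intro h
        have : z = 1 := by field_simp at h; linarith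
        linarith)
    rw [Real.log_div one_ne_zero (ne_of_gt hz0), Real.log_one] at hk
    have key : z - 1 < z * Real.log z := by
      have := mul_lt_mul_of_pos_left hk hz0
      field_simp at this
      nlinarith
    have h2 : (v - μ - z * Real.log v) * Real.log z
        = Real.log v * (z - μ - z * Real.log z) := by linear_combination hroot
    have h1 : 0 < Real.log v * (z - μ - z * Real.log z) := by nlinarith
    rw [div_lt_iff_of_neg hlv]
    nlinarith
end

section
/- Let μ > 1, v > μ, z_v the unique root in (0,1) of (v−μ)·ln z + (μ−z)·ln v = 0, and z̃_v = (v−μ)/ln v. Then z_v = −z̃_v · W₀(−exp(−μ/z̃_v)/z̃_v), where W₀ is the principal branch of Lambert's W function; equivalently, t_v := −z_v/z̃_v ∈ (−1, 0) and t_v·exp(t_v) = −exp(−μ/z̃_v)/z̃_v. -/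
theorem stmt18 (μ v z : ℝ) (hμ : 1 < μ) (hv : μ < v)
    (hz : z ∈ Set.Ioo (0 : ℝ) 1)
    (hroot : (v - μ) * Real.log z + (μ - z) * Real.log v = 0) :
    let zt : ℝ := (v - μ) / Real.log v
    let t : ℝ := -z / zt
    t ∈ Set.Ioo (-1 : ℝ) 0 ∧ t * Real.exp t = -Real.exp (-μ / zt) / zt := by
  obtain ⟨hz0, hz1⟩ := hz
  have hv1 : (1:ℝ) < v := hμ.trans hv
  have hlogv : 0 < Real.log v := Real.log_pos hv1
  have hvμ : 0 < v - μ := by linarith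
  intro zt t
  have hzt : 0 < zt := div_pos hvμ hlogv
  have hlogz : Real.log z = (z - μ) / zt := by
    show Real.log z = (z - μ) / ((v - μ) / Real.log v)
    rw [div_div_eq_mul_div]
    field_simp
    nlinarith [hroot]
  have hlb : 1 - 1/z < Real.log z := by
    have h1 : Real.log z⁻¹ < z⁻¹ - 1 :=
      Real.log_lt_sub_one_of_pos (by positivity) (by rw [ne_eq, inv_eq_one]; linarith)
    rw [Real.log_inv] at h1
    rw [one_div]
    linarith
  -- key: z < zt
  have hkey : z < zt := by
    have h2 : (z - μ) / zt > (z - 1) / z := by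
      have : (z-1)/z = 1 - 1/z := by field_simp
      rw [this, ← hlogz]; exact hlb
    have h3 : z * (z - μ) > zt * (z - 1) := by
      rw [gt_iff_lt, div_lt_div_iff₀ hz0 hzt] at h2
      linarith [h2]
    nlinarith [h3, hzt, hz0]
  have ht0 : t < 0 := by
    show -z / zt < 0
    exact div_neg_of_neg_of_pos (by linarith) hzt
  have ht1 : -1 < t := by
    show -1 < -z / zt
    rw [neg_div, neg_lt_neg_iff, div_lt_one hzt]
    exact hkey
  refine ⟨⟨ht1, ht0⟩, ?_⟩
  have hz_eq : z = Real.exp ((z - μ) / zt) := by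
    rw [← hlogz, Real.exp_log hz0]
  have hexp : Real.exp (-μ / zt) = z * Real.exp (-z / zt) := by
    calc Real.exp (-μ / zt) = Real.exp ((z - μ) / zt) * Real.exp (-z / zt) := by
          rw [← Real.exp_add]
          congr 1
          field_simp
          ring
      _ = z * Real.exp (-z / zt) := by rw [← hz_eq]
  show (-z / zt) * Real.exp (-z / zt) = -Real.exp (-μ / zt) / zt
  rw [hexp]
  ring
end
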